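/- In the constraint-uncertainty DDID selection problem, for any query set I and any budget ΓI ∈ {0, 1, ..., min(|I|, Γ)} of attacks on queried items, an optimal adversary choice γ attacking exactly ΓI queried items can be taken to attack the ΓI queried items with smallest cost c; that is, there exists a maximizer γ* of the inner value with γ*_i = 1 exactly for the ΓI cheapest elements of I. -/

import Mathlib

open Finset

/-- Inner value of the constraint-uncertainty DDID selection problem for a fixed
adversary observation `γ`, valued in `EReal` (`⊤` when infeasible). -/
noncomputable def innerCU (n p b Γ : ℕ) (c : Fin n → ℝ) (I : Finset (Fin n))
    (γ : Fin n → Bool) : EReal :=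
  sInf {v : EReal | ∃ x : Fin n → Bool,
    (Finset.univ.filter (fun i => x i = true)).card = p ∧
    (∀ δ : Fin n → Bool,
      (Finset.univ.filter (fun i => δ i = true)).card ≤ Γ →
      (∀ i ∈ I, δ i = γ i) →
      (Finset.univ.filter (fun i => δ i = true ∧ x i = true)).card ≤ b) ∧
    v = ((∑ i ∈ Finset.univ.filter (fun i => x i = true), c i : ℝ) : EReal)}

/-- The `k` smallest elements of a finset of a linear order. -/
lemma exists_minimal_subset {α : Type*} [LinearOrder α] [DecidableEq α]
    (I : Finset α) : ∀ k ≤ I.card,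
    ∃ S ⊆ I, S.card = k ∧ ∀ i ∈ S, ∀ j ∈ I, j ∉ S → i ≤ j := by
  intro k
  induction k with
  | zero => exact fun _ => ⟨∅, empty_subset _, card_empty, by simp⟩
  | succ m ih =>
    intro hk
    obtain ⟨S, hSI, hScard, hSmin⟩ := ih (by omega)
    have hne : (I \ S).Nonempty := by
      rw [← card_pos, card_sdiff_of_subset hSI]; omega
    set a := (I \ S).min' hne with ha
    have haI : a ∈ I \ S := min'_mem _ hne
    refine ⟨insert a S, ?_, ?_, ?_⟩
    · exact insert_subset (mem_sdiff.mp haI).1 hSI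
    · rw [card_insert_of_notMem (mem_sdiff.mp haI).2, hScard]
    · intro i hi j hj hjS
      rcases mem_insert.mp hi with h | h
      · subst h
        exact min'_le _ _ (mem_sdiff.mpr ⟨hj, fun hjS' => hjS (mem_insert_of_mem hjS')⟩)
      · exact hSmin i h j hj (fun hjS' => hjS (mem_insert_of_mem hjS'))

theorem stmt18 (n p b Γ ΓI : ℕ) (c : Fin n → ℝ) (hmono : Monotone c)
    (I : Finset (Fin n)) (hΓI1 : ΓI ≤ I.card) (hΓI2 : ΓI ≤ Γ) :
    ∃ S ⊆ I, S.card = ΓI ∧ (∀ i ∈ S, ∀ j ∈ I, j ∉ S → i ≤ j) ∧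
      ∀ γ : Fin n → Bool, (∀ i, γ i = true → i ∈ I) →
        (Finset.univ.filter (fun i => γ i = true)).card = ΓI →
        innerCU n p b Γ c I γ ≤ innerCU n p b Γ c I (fun i => decide (i ∈ S)) := by
  obtain ⟨S, hSI, hScard, hSmin⟩ := exists_minimal_subset I ΓI hΓI1
  refine ⟨S, hSI, hScard, hSmin, ?_⟩
  intro γ hsupp hγcard
  apply le_sInf
  rintro v ⟨x, hxp, hxδ, rfl⟩
  -- notation
  set X : Finset (Fin n) := univ.filter (fun i => x i = true) with hXdef
  set T : Finset (Fin n) := univ.filter (fun i => γ i = true) with hTdef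
  have hTI : T ⊆ I := fun i hi => hsupp i (by simpa [hTdef] using hi)
  have hTcard : T.card = ΓI := hγcard
  obtain ⟨k, hk⟩ : ∃ k, k = (X ∩ (T \ S)).card := ⟨_, rfl⟩
  obtain ⟨m, hm⟩ : ∃ m, m = (X ∩ (S \ T)).card := ⟨_, rfl⟩
  obtain ⟨d, hd⟩ : ∃ d, d = k - m := ⟨_, rfl⟩
  -- choose D ⊆ X ∩ (T \ S) of size d
  obtain ⟨D, hDsub, hDcard⟩ : ∃ D ⊆ X ∩ (T \ S), D.card = d :=
    Finset.exists_subset_card_eq (by rw [← hk]; omega)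
  -- choose A ⊆ (S \ T) \ X of size d
  have hTS_ST : (T \ S).card = (S \ T).card :=
    Finset.card_sdiff_comm (hTcard.trans hScard.symm)
  have hkTS : k ≤ (T \ S).card := hk ▸ card_le_card inter_subset_right
  have hAle : d ≤ ((S \ T) \ X).card := by
    have h1 : ((S \ T) \ X).card + ((S \ T) ∩ X).card = (S \ T).card :=
      Finset.card_sdiff_add_card_inter _ _
    have h2 : ((S \ T) ∩ X).card = m := by rw [inter_comm, ← hm]
    omega
  obtain ⟨A, hAsub, hAcard⟩ : ∃ A ⊆ (S \ T) \ X, A.card = d :=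
    Finset.exists_subset_card_eq hAle
  set X' : Finset (Fin n) := (X \ D) ∪ A with hX'def
  -- basic facts
  have hDX : D ⊆ X := hDsub.trans inter_subset_left
  have hDT : D ⊆ T \ S := hDsub.trans inter_subset_right
  have hAS : A ⊆ S \ T := hAsub.trans sdiff_subset
  have hAX : ∀ i ∈ A, i ∉ X := fun i hi => (mem_sdiff.mp (hAsub hi)).2
  have hX'mem : ∀ i, i ∈ X' ↔ (i ∈ X ∧ i ∉ D) ∨ i ∈ A := by
    intro i; simp [hX'def, mem_union, mem_sdiff]
  -- outside I, X' agrees with X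
  have hX'I : ∀ i, i ∉ I → (i ∈ X' ↔ i ∈ X) := by
    intro i hiI
    have hiD : i ∉ D := fun h => hiI (hTI (mem_sdiff.mp (hDT h)).1)
    have hiA : i ∉ A := fun h => hiI (hSI (mem_sdiff.mp (hAS h)).1)
    rw [hX'mem]; tauto
  have hdk : d ≤ k := by omega
  have hkX : k ≤ X.card := hk ▸ card_le_card inter_subset_left
  have hXp : X.card = p := hxp
  -- cardinality of X'
  have hdisj : Disjoint (X \ D) A := by
    rw [disjoint_right]
    intro i hiA hiXD
    exact hAX i hiA (mem_sdiff.mp hiXD).1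
  have hX'card : X'.card = p := by
    rw [hX'def, card_union_of_disjoint hdisj, card_sdiff_of_subset hDX, hDcard, hAcard]
    omega
  -- the key intersection bound
  have hkey : (T ∩ X').card ≤ (S ∩ X).card := by
    have hTX' : T ∩ X' = (T ∩ X) \ D := by
      ext i
      simp only [mem_inter, hX'mem, mem_sdiff]
      constructor
      · rintro ⟨hiT, (⟨hiX, hiD⟩ | hiA)⟩
        · exact ⟨⟨hiT, hiX⟩, hiD⟩
        · exact absurd hiT (mem_sdiff.mp (hAS hiA)).2
      · rintro ⟨⟨hiT, hiX⟩, hiD⟩; exact ⟨hiT, Or.inl ⟨hiX, hiD⟩⟩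
    have hDTX : D ⊆ T ∩ X := fun i hi =>
      mem_inter.mpr ⟨(mem_sdiff.mp (hDT hi)).1, hDX hi⟩
    have h1 : (T ∩ X).card = ((T ∩ X) ∩ S).card + k := by
      have he : (T ∩ X) \ S = X ∩ (T \ S) := by
        ext i; simp only [mem_sdiff, mem_inter]; tauto
      rw [hk, ← Finset.card_inter_add_card_sdiff (T ∩ X) S, he]
    have h2 : (S ∩ X).card = ((S ∩ X) ∩ T).card + m := by
      have he : (S ∩ X) \ T = X ∩ (S \ T) := by
        ext i; simp only [mem_sdiff, mem_inter]; tauto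
      rw [hm, ← Finset.card_inter_add_card_sdiff (S ∩ X) T, he]
    have h3 : ((T ∩ X) ∩ S).card = ((S ∩ X) ∩ T).card := by
      congr 1; ext i; simp only [mem_inter]; tauto
    rw [hTX', card_sdiff_of_subset hDTX, hDcard]
    omega
  -- cost bound
  have hsum : ∑ i ∈ X', c i ≤ ∑ i ∈ X, c i := by
    have hAD : ∑ i ∈ A, c i ≤ ∑ i ∈ D, c i := by
      rcases Nat.eq_zero_or_pos d with h0 | hpos
      · rw [card_eq_zero.mp (hAcard.trans h0), card_eq_zero.mp (hDcard.trans h0)]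
      · have hDne : D.Nonempty := card_pos.mp (by omega)
        set e := D.min' hDne with he
        have heD : e ∈ D := min'_mem _ _
        have hstep : ∀ a ∈ A, c a ≤ c e := by
          intro a haA
          have haS : a ∈ S := (mem_sdiff.mp (hAS haA)).1
          have heTS : e ∈ T \ S := hDT heD
          have heI : e ∈ I := hTI (mem_sdiff.mp heTS).1
          exact hmono (hSmin a haS e heI (mem_sdiff.mp heTS).2)
        calc ∑ i ∈ A, c i ≤ ∑ _i ∈ A, c e := Finset.sum_le_sum hstep
          _ = A.card • c e := by rw [Finset.sum_const]
          _ = D.card • c e := by rw [hAcard, hDcard]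
          _ ≤ ∑ i ∈ D, c i :=
            Finset.card_nsmul_le_sum D c (c e) (fun i hi => hmono (min'_le _ _ hi))
    rw [hX'def, Finset.sum_union hdisj, Finset.sum_sdiff_eq_sub hDX]
    linarith
  -- feasibility of x'
  set x' : Fin n → Bool := fun i => decide (i ∈ X') with hx'def
  have hfilt : univ.filter (fun i => x' i = true) = X' := by
    ext i; simp [hx'def]
  have hx'p : (univ.filter (fun i => x' i = true)).card = p := by
    rw [hfilt]; exact hX'card
  have hx'δ : ∀ δ' : Fin n → Bool,
      (univ.filter (fun i => δ' i = true)).card ≤ Γ →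
      (∀ i ∈ I, δ' i = γ i) →
      (univ.filter (fun i => δ' i = true ∧ x' i = true)).card ≤ b := by
    intro δ' hδ'card hδ'agree
    set δ : Fin n → Bool := fun i => if i ∈ I then decide (i ∈ S) else δ' i with hδdef
    set Dδ' : Finset (Fin n) := univ.filter (fun i => δ' i = true) with hDδ'
    set Dδ : Finset (Fin n) := univ.filter (fun i => δ i = true) with hDδdef
    -- support of δ' inside I is T
    have hδ'I : Dδ' ∩ I = T := by
      ext i
      simp only [hDδ', hTdef, mem_inter, mem_filter, mem_univ, true_and]
      constructor
      · rintro ⟨h1, h2⟩; rw [← hδ'agree i h2]; exact h1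
      · intro h; have hiI := hsupp i h; exact ⟨by rw [hδ'agree i hiI]; exact h, hiI⟩
    -- support of δ inside I is S
    have hδI : Dδ ∩ I = S := by
      ext i
      simp only [hDδdef, hδdef, mem_inter, mem_filter, mem_univ, true_and]
      constructor
      · rintro ⟨h1, h2⟩; rw [if_pos h2] at h1; exact decide_eq_true_eq.mp h1
      · intro h; have hiI := hSI h; exact ⟨by rw [if_pos hiI]; simpa, hiI⟩
    -- outside I, δ = δ'
    have hδout : ∀ i, i ∉ I → δ i = δ' i := fun i hi => by rw [hδdef]; simp [hi]
    have hDδsdiff : Dδ \ I = Dδ' \ I := by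
      ext i
      simp only [hDδdef, hDδ', mem_sdiff, mem_filter, mem_univ, true_and]
      constructor
      · rintro ⟨h1, h2⟩; exact ⟨by rw [← hδout i h2]; exact h1, h2⟩
      · rintro ⟨h1, h2⟩; exact ⟨by rw [hδout i h2]; exact h1, h2⟩
    have hDδcard : Dδ.card ≤ Γ := by
      have e1 : Dδ.card = (Dδ ∩ I).card + (Dδ \ I).card :=
        (Finset.card_inter_add_card_sdiff _ _).symm
      have e2 : Dδ'.card = (Dδ' ∩ I).card + (Dδ' \ I).card :=
        (Finset.card_inter_add_card_sdiff _ _).symm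
      rw [hδI] at e1
      rw [hδ'I] at e2
      rw [hDδsdiff] at e1
      omega
    have hδagree : ∀ i ∈ I, δ i = decide (i ∈ S) := by
      intro i hi; rw [hδdef]; simp [hi]
    have hfeas := hxδ δ hDδcard hδagree
    -- rewrite filters as intersections
    have hrw : ∀ (e : Fin n → Bool) (y : Fin n → Bool),
        univ.filter (fun i => e i = true ∧ y i = true) =
        (univ.filter (fun i => e i = true)) ∩ (univ.filter (fun i => y i = true)) := by
      intro e y; ext i; simp
    rw [hrw] at hfeas ⊢
    rw [hfilt]
    rw [← hXdef] at hfeas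
    -- split both sides along I
    have goal_split : (Dδ' ∩ X').card = (Dδ' ∩ X' ∩ I).card + ((Dδ' ∩ X') \ I).card :=
      (Finset.card_inter_add_card_sdiff _ _).symm
    have feas_split : (Dδ ∩ X).card = (Dδ ∩ X ∩ I).card + ((Dδ ∩ X) \ I).card :=
      (Finset.card_inter_add_card_sdiff _ _).symm
    have hin1 : Dδ' ∩ X' ∩ I = T ∩ X' := by
      have : Dδ' ∩ X' ∩ I = (Dδ' ∩ I) ∩ X' := by
        ext i; simp only [mem_inter]; tauto
      rw [this, hδ'I]
    have hin2 : Dδ ∩ X ∩ I = S ∩ X := by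
      have : Dδ ∩ X ∩ I = (Dδ ∩ I) ∩ X := by
        ext i; simp only [mem_inter]; tauto
      rw [this, hδI]
    have hout : (Dδ' ∩ X') \ I = (Dδ ∩ X) \ I := by
      ext i
      by_cases h3 : i ∈ I
      · simp [mem_sdiff, h3]
      · simp only [mem_sdiff, mem_inter, hDδdef, hDδ', mem_filter, mem_univ, true_and]
        rw [hδout i h3, hX'I i h3]
    rw [goal_split, hin1, hout]
    rw [feas_split, hin2] at hfeas
    omega
  -- conclude
  have hmem : ((∑ i ∈ X', c i : ℝ) : EReal) ∈ {v : EReal | ∃ x : Fin n → Bool,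
      (Finset.univ.filter (fun i => x i = true)).card = p ∧
      (∀ δ : Fin n → Bool,
        (Finset.univ.filter (fun i => δ i = true)).card ≤ Γ →
        (∀ i ∈ I, δ i = γ i) →
        (Finset.univ.filter (fun i => δ i = true ∧ x i = true)).card ≤ b) ∧
      v = ((∑ i ∈ Finset.univ.filter (fun i => x i = true), c i : ℝ) : EReal)} := by
    exact ⟨x', hx'p, hx'δ, by rw [hfilt]⟩
  calc innerCU n p b Γ c I γ ≤ ((∑ i ∈ X', c i : ℝ) : EReal) := sInf_le hmem
    _ ≤ ((∑ i ∈ X, c i : ℝ) : EReal) := EReal.coe_le_coe_iff.mpr hsum
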